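/- Let π be a non-crossing partition of a totally ordered set S obtained by concatenation: S is partitioned into consecutive intervals {V : V block of an interval partition σ}, and π = ⊔_{V ∈ σ} τ_V with τ_V a non-crossing partition of V. Then for any rooted subtree T with n = |[N] ∩ T| ≥ 2, the coefficients are multiplicative: α_{T,π} = Π_{V ∈ σ} α_{T, τ_V}. -/

import Mathlib

/-- The alternating reduction of a string: replace each maximal run of
consecutive equal letters by a single occurrence of that letter. -/
def red {α : Type*} [DecidableEq α] : List α → List α
  | [] => []
  | [a] => [a]
  | a :: b :: t => if a = b then red (b :: t) else a :: red (b :: t)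

/-- A rooted subtree of the tree of alternating strings on alphabet `α`. -/
def IsRootedSubtree {α : Type*} (S : Set (List α)) : Prop :=
  (∀ s ∈ S, s.Chain' (· ≠ ·)) ∧ [] ∈ S ∧ ∀ s ∈ S, s.tail ∈ S

/-- Partitions of finite subsets of `ℕ` (finite totally ordered sets, up to
isomorphism), given by their set of blocks. -/
abbrev Blocks : Type := Finset (Finset ℕ)

/-- `π` is a non-crossing partition (of its ground set `⋃ π`). -/
def IsNC (π : Blocks) : Prop :=
  (∀ B ∈ π, B.Nonempty) ∧
  (∀ B ∈ π, ∀ C ∈ π, B ≠ C → Disjoint B C) ∧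
  (∀ B ∈ π, ∀ C ∈ π, B ≠ C →
    ¬ ∃ i₁ j₁ i₂ j₂ : ℕ, i₁ < j₁ ∧ j₁ < i₂ ∧ i₂ < j₂ ∧
      i₁ ∈ B ∧ i₂ ∈ B ∧ j₁ ∈ C ∧ j₂ ∈ C)

/-- `V` is nested inside `W`. -/
def NestedIn (V W : Finset ℕ) : Prop :=
  ∃ j ∈ W, ∃ k ∈ W, ∀ x ∈ V, j < x ∧ x < k

/-- `V` is immediately nested inside `W` (an edge of the nesting tree of `π`). -/
def ImmNested (π : Blocks) (V W : Finset ℕ) : Prop :=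
  NestedIn V W ∧ ¬ ∃ X ∈ π, NestedIn V X ∧ NestedIn X W

/-- Adjacency of blocks in the nesting tree `graph(π)` (away from the root). -/
def AdjBlocks (π : Blocks) (V W : Finset ℕ) : Prop :=
  ImmNested π V W ∨ ImmNested π W V

/-- `V` and `W` lie in the same `χ`-component of `π`: they are joined by a path
in `graph(π) ∖ {∅}` all of whose edges join blocks of the same color. -/
def sameComp {N : ℕ} (π : Blocks) (χ : Finset ℕ → Fin N) (V W : Finset ℕ) : Prop :=
  Relation.ReflTransGen
    (fun X Y => X ∈ π ∧ Y ∈ π ∧ AdjBlocks π X Y ∧ χ X = χ Y) V W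

open Classical in
noncomputable def component {N : ℕ} (π : Blocks) (χ : Finset ℕ → Fin N)
    (V : Finset ℕ) : Finset (Finset ℕ) :=
  π.filter (fun W => sameComp π χ V W)

-- The `χ`-components of `π`.
open Classical in
noncomputable def components {N : ℕ} (π : Blocks) (χ : Finset ℕ → Fin N) :
    Finset Blocks :=
  π.image (fun V => component π χ V)

/-- `L` is the chain of `V` in `π`: the list `(V, V₁, …, V_d)` consisting of `V`
followed by all blocks surrounding `V`, each nested in the next. -/
def IsChainList (π : Blocks) (V : Finset ℕ) (L : List (Finset ℕ)) : Prop :=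
  L.head? = some V ∧ (∀ W, W ∈ L.tail ↔ W ∈ π ∧ NestedIn V W) ∧
  L.Chain' (fun X Y => NestedIn X Y) ∧ L.Nodup

/-- `χ ∈ X_w(π,T)`: for every block `V`, the alternating reduction of the color
string along the chain of `V` lies in `T`. -/
def WeaklyCompatible {N : ℕ} (T : Set (List (Fin N))) (π : Blocks)
    (χ : Finset ℕ → Fin N) : Prop :=
  ∀ V ∈ π, ∀ L : List (Finset ℕ), IsChainList π V L → red (L.map χ) ∈ T

/-- Extend a coloring of the blocks of `π` by a junk value. -/
def extendColor {N : ℕ} [NeZero N] (π : Blocks)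
    (χ : {V : Finset ℕ // V ∈ π} → Fin N) : Finset ℕ → Fin N :=
  fun W => if h : W ∈ π then χ ⟨W, h⟩ else 0

-- The right-hand side of the fixed-point identity for the cumulant
-- coefficients: `n^{−|π|} Σ_{χ ∈ X_w(π,T)} Π_{χ-components π'} a(π')`.
open Classical in
noncomputable def cumulantRHS {N : ℕ} [NeZero N] (n : ℕ) (T : Set (List (Fin N)))
    (a : Blocks → ℝ) (π : Blocks) : ℝ :=
  (∑ χ : ({V : Finset ℕ // V ∈ π} → Fin N),
      if WeaklyCompatible T π (extendColor π χ) then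
        ∏ τ ∈ components π (extendColor π χ), a τ
      else 0) / (n : ℝ) ^ π.card

/-- `a` is a family of cumulant coefficients for `T`: normalized on one-block
partitions, and satisfying the fixed-point identity for all non-crossing `π`. -/
def SatisfiesFP {N : ℕ} [NeZero N] (n : ℕ) (T : Set (List (Fin N)))
    (a : Blocks → ℝ) : Prop :=
  (∀ π : Blocks, IsNC π → π.card = 1 → a π = 1) ∧
  (∀ π : Blocks, IsNC π → a π = cumulantRHS n T a π)

/-- `π` is an interval partition: every block is order-convex within the ground set. -/
def IsIntervalPart (π : Blocks) : Prop :=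
  ∀ B ∈ π, ∀ x ∈ B, ∀ z ∈ B, ∀ y ∈ π.biUnion id, x ≤ y → y ≤ z → y ∈ B


section Aux

open Classical

/-! ### Generic lemmas about chains, components, and colorings -/

lemma chainList_mem {ρ : Blocks} {B : Finset ℕ} {L : List (Finset ℕ)}
    (hB : B ∈ ρ) (hL : IsChainList ρ B L) : ∀ W ∈ L, W ∈ ρ := by
  obtain ⟨h1, h2, -, -⟩ := hL
  intro W hW
  cases L with
  | nil => simp at hW
  | cons a t =>
      simp only [List.head?_cons, Option.some.injEq] at h1
      rcases List.mem_cons.1 hW with rfl | hW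
      · exact h1 ▸ hB
      · exact ((h2 W).1 hW).1

lemma sameComp_mem {N : ℕ} {ρ : Blocks} {χ : Finset ℕ → Fin N} {B W : Finset ℕ}
    (hB : B ∈ ρ) (h : sameComp ρ χ B W) : W ∈ ρ := by
  induction h with
  | refl => exact hB
  | tail _ h2 _ => exact h2.2.1

lemma sameComp_congr {N : ℕ} {ρ : Blocks} {χ χ' : Finset ℕ → Fin N}
    (h : ∀ B ∈ ρ, χ B = χ' B) {V W : Finset ℕ} :
    sameComp ρ χ V W ↔ sameComp ρ χ' V W := by
  constructor <;> intro hs <;> refine Relation.ReflTransGen.mono ?_ _ _ hs <;>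
    rintro X Y ⟨hX, hY, hadj, hχ⟩ <;> refine ⟨hX, hY, hadj, ?_⟩
  · rw [← h X hX, ← h Y hY]; exact hχ
  · rw [h X hX, h Y hY]; exact hχ

lemma component_congr {N : ℕ} {ρ : Blocks} {χ χ' : Finset ℕ → Fin N}
    (h : ∀ B ∈ ρ, χ B = χ' B) (V : Finset ℕ) :
    component ρ χ V = component ρ χ' V := by
  unfold component
  exact Finset.filter_congr fun W _ => sameComp_congr h

lemma components_congr {N : ℕ} {ρ : Blocks} {χ χ' : Finset ℕ → Fin N}
    (h : ∀ B ∈ ρ, χ B = χ' B) :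
    components ρ χ = components ρ χ' := by
  unfold components
  exact Finset.image_congr fun V _ => component_congr h V

lemma wc_congr {N : ℕ} {T : Set (List (Fin N))} {ρ : Blocks}
    {χ χ' : Finset ℕ → Fin N} (h : ∀ B ∈ ρ, χ B = χ' B) :
    WeaklyCompatible T ρ χ ↔ WeaklyCompatible T ρ χ' := by
  constructor <;> intro hw B hB L hL <;> have hm := chainList_mem hB hL <;>
    have : L.map χ = L.map χ' := List.map_congr_left fun W hW => h W (hm W hW)
  · rw [← this]; exact hw B hB L hL
  · rw [this]; exact hw B hB L hL

/-! ### The concatenation setting -/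

variable {σ : Blocks} {τ : Finset ℕ → Blocks}

lemma block_unique (hσNC : IsNC σ)
    (hτ : ∀ V ∈ σ, IsNC (τ V) ∧ (∀ B ∈ τ V, B ⊆ V) ∧ (τ V).biUnion id = V)
    {V V' B : Finset ℕ} (hV : V ∈ σ) (hV' : V' ∈ σ)
    (hB : B ∈ τ V) (hB' : B ∈ τ V') : V = V' := by
  by_contra hne
  obtain ⟨x, hx⟩ := (hτ V hV).1.1 B hB
  exact Finset.disjoint_left.mp (hσNC.2.1 V hV V' hV' hne)
    ((hτ V hV).2.1 B hB hx) ((hτ V' hV').2.1 B hB' hx)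

lemma nested_same (hσNC : IsNC σ) (hσint : IsIntervalPart σ)
    (hτ : ∀ V ∈ σ, IsNC (τ V) ∧ (∀ B ∈ τ V, B ⊆ V) ∧ (τ V).biUnion id = V)
    {V V' B W : Finset ℕ} (hV : V ∈ σ) (hV' : V' ∈ σ)
    (hB : B ∈ τ V) (hW : W ∈ τ V') (hnest : NestedIn B W) : V = V' := by
  obtain ⟨j, hj, k, hk, hjk⟩ := hnest
  obtain ⟨x, hx⟩ := (hτ V hV).1.1 B hB
  obtain ⟨hjx, hxk⟩ := hjk x hx
  have hxV' : x ∈ V' :=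
    hσint V' hV' j ((hτ V' hV').2.1 W hW hj) k ((hτ V' hV').2.1 W hW hk)
      x (Finset.mem_biUnion.2 ⟨V, hV, (hτ V hV).2.1 B hB hx⟩) hjx.le hxk.le
  by_contra hne
  exact Finset.disjoint_left.mp (hσNC.2.1 V hV V' hV' hne)
    ((hτ V hV).2.1 B hB hx) hxV'

lemma pi_NC (hσNC : IsNC σ) (hσint : IsIntervalPart σ)
    (hτ : ∀ V ∈ σ, IsNC (τ V) ∧ (∀ B ∈ τ V, B ⊆ V) ∧ (τ V).biUnion id = V) :
    IsNC (σ.biUnion τ) := by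
  refine ⟨?_, ?_, ?_⟩
  · intro B hB
    obtain ⟨V, hV, hB⟩ := Finset.mem_biUnion.1 hB
    exact (hτ V hV).1.1 B hB
  · intro B hB C hC hne
    obtain ⟨V, hV, hB⟩ := Finset.mem_biUnion.1 hB
    obtain ⟨V', hV', hC⟩ := Finset.mem_biUnion.1 hC
    by_cases hVV : V = V'
    · subst hVV; exact (hτ V hV).1.2.1 B hB C hC hne
    · exact Finset.disjoint_of_subset_left ((hτ V hV).2.1 B hB)
        (Finset.disjoint_of_subset_right ((hτ V' hV').2.1 C hC)
          (hσNC.2.1 V hV V' hV' hVV))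
  · rintro B hB C hC hne ⟨i₁, j₁, i₂, j₂, h1, h2, h3, hi₁, hi₂, hj₁, hj₂⟩
    obtain ⟨V, hV, hB⟩ := Finset.mem_biUnion.1 hB
    obtain ⟨V', hV', hC⟩ := Finset.mem_biUnion.1 hC
    by_cases hVV : V = V'
    · subst hVV
      exact (hτ V hV).1.2.2 B hB C hC hne ⟨i₁, j₁, i₂, j₂, h1, h2, h3, hi₁, hi₂, hj₁, hj₂⟩
    · have hj₁V : j₁ ∈ V :=
        hσint V hV i₁ ((hτ V hV).2.1 B hB hi₁) i₂ ((hτ V hV).2.1 B hB hi₂)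
          j₁ (Finset.mem_biUnion.2 ⟨V', hV', (hτ V' hV').2.1 C hC hj₁⟩) h1.le h2.le
      exact Finset.disjoint_left.mp (hσNC.2.1 V hV V' hV' hVV) hj₁V
        ((hτ V' hV').2.1 C hC hj₁)

lemma nested_iff (hσNC : IsNC σ) (hσint : IsIntervalPart σ)
    (hτ : ∀ V ∈ σ, IsNC (τ V) ∧ (∀ B ∈ τ V, B ⊆ V) ∧ (τ V).biUnion id = V)
    {V B : Finset ℕ} (hV : V ∈ σ) (hB : B ∈ τ V) (W : Finset ℕ) :
    (W ∈ σ.biUnion τ ∧ NestedIn B W) ↔ (W ∈ τ V ∧ NestedIn B W) := by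
  constructor
  · rintro ⟨hW, hn⟩
    obtain ⟨V', hV', hW'⟩ := Finset.mem_biUnion.1 hW
    have := nested_same hσNC hσint hτ hV hV' hB hW' hn
    subst this
    exact ⟨hW', hn⟩
  · rintro ⟨hW, hn⟩
    exact ⟨Finset.mem_biUnion.2 ⟨V, hV, hW⟩, hn⟩

lemma chain_iff (hσNC : IsNC σ) (hσint : IsIntervalPart σ)
    (hτ : ∀ V ∈ σ, IsNC (τ V) ∧ (∀ B ∈ τ V, B ⊆ V) ∧ (τ V).biUnion id = V)
    {V B : Finset ℕ} (hV : V ∈ σ) (hB : B ∈ τ V) (L : List (Finset ℕ)) :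
    IsChainList (σ.biUnion τ) B L ↔ IsChainList (τ V) B L := by
  unfold IsChainList
  constructor <;> rintro ⟨h1, h2, h3, h4⟩ <;> refine ⟨h1, fun W => ?_, h3, h4⟩
  · exact (h2 W).trans (nested_iff hσNC hσint hτ hV hB W)
  · exact (h2 W).trans (nested_iff hσNC hσint hτ hV hB W).symm

lemma immNested_iff (hσNC : IsNC σ) (hσint : IsIntervalPart σ)
    (hτ : ∀ V ∈ σ, IsNC (τ V) ∧ (∀ B ∈ τ V, B ⊆ V) ∧ (τ V).biUnion id = V)
    {V X Y : Finset ℕ} (hV : V ∈ σ) (hX : X ∈ τ V) (hY : Y ∈ τ V) :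
    ImmNested (σ.biUnion τ) X Y ↔ ImmNested (τ V) X Y := by
  unfold ImmNested
  refine and_congr_right fun _ => not_congr ⟨?_, ?_⟩
  · rintro ⟨Z, hZ, h1, h2⟩
    obtain ⟨V'', hV'', hZ'⟩ := Finset.mem_biUnion.1 hZ
    have := nested_same hσNC hσint hτ hV hV'' hX hZ' h1
    subst this
    exact ⟨Z, hZ', h1, h2⟩
  · rintro ⟨Z, hZ, h1, h2⟩
    exact ⟨Z, Finset.mem_biUnion.2 ⟨V, hV, hZ⟩, h1, h2⟩

lemma adj_iff (hσNC : IsNC σ) (hσint : IsIntervalPart σ)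
    (hτ : ∀ V ∈ σ, IsNC (τ V) ∧ (∀ B ∈ τ V, B ⊆ V) ∧ (τ V).biUnion id = V)
    {V X Y : Finset ℕ} (hV : V ∈ σ) (hX : X ∈ τ V) (hY : Y ∈ τ V) :
    AdjBlocks (σ.biUnion τ) X Y ↔ AdjBlocks (τ V) X Y :=
  or_congr (immNested_iff hσNC hσint hτ hV hX hY) (immNested_iff hσNC hσint hτ hV hY hX)

lemma adj_mem (hσNC : IsNC σ) (hσint : IsIntervalPart σ)
    (hτ : ∀ V ∈ σ, IsNC (τ V) ∧ (∀ B ∈ τ V, B ⊆ V) ∧ (τ V).biUnion id = V)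
    {V X Y : Finset ℕ} (hV : V ∈ σ) (hX : X ∈ τ V) (hY : Y ∈ σ.biUnion τ)
    (hadj : AdjBlocks (σ.biUnion τ) X Y) : Y ∈ τ V := by
  obtain ⟨V', hV', hY'⟩ := Finset.mem_biUnion.1 hY
  rcases hadj with ⟨h, -⟩ | ⟨h, -⟩
  · have := nested_same hσNC hσint hτ hV hV' hX hY' h
    subst this; exact hY'
  · have := nested_same hσNC hσint hτ hV' hV hY' hX h
    subst this; exact hY'

lemma sameComp_iff {N : ℕ} (hσNC : IsNC σ) (hσint : IsIntervalPart σ)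
    (hτ : ∀ V ∈ σ, IsNC (τ V) ∧ (∀ B ∈ τ V, B ⊆ V) ∧ (τ V).biUnion id = V)
    {V B : Finset ℕ} (hV : V ∈ σ) (hB : B ∈ τ V) {χ : Finset ℕ → Fin N}
    {W : Finset ℕ} :
    sameComp (σ.biUnion τ) χ B W ↔ sameComp (τ V) χ B W := by
  constructor
  · intro h
    induction h with
    | refl => exact Relation.ReflTransGen.refl
    | @tail b c h1 h2 ih =>
        obtain ⟨hbπ, hcπ, hadj, hχ⟩ := h2
        have hbτ : b ∈ τ V := sameComp_mem hB ih
        have hcτ : c ∈ τ V := adj_mem hσNC hσint hτ hV hbτ hcπ hadj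
        exact ih.tail ⟨hbτ, hcτ, (adj_iff hσNC hσint hτ hV hbτ hcτ).1 hadj, hχ⟩
  · intro h
    induction h with
    | refl => exact Relation.ReflTransGen.refl
    | @tail b c h1 h2 ih =>
        obtain ⟨hbτ, hcτ, hadj, hχ⟩ := h2
        exact ih.tail ⟨Finset.mem_biUnion.2 ⟨V, hV, hbτ⟩,
          Finset.mem_biUnion.2 ⟨V, hV, hcτ⟩,
          (adj_iff hσNC hσint hτ hV hbτ hcτ).2 hadj, hχ⟩

lemma component_eq {N : ℕ} (hσNC : IsNC σ) (hσint : IsIntervalPart σ)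
    (hτ : ∀ V ∈ σ, IsNC (τ V) ∧ (∀ B ∈ τ V, B ⊆ V) ∧ (τ V).biUnion id = V)
    {V B : Finset ℕ} (hV : V ∈ σ) (hB : B ∈ τ V) (χ : Finset ℕ → Fin N) :
    component (σ.biUnion τ) χ B = component (τ V) χ B := by
  ext W
  simp only [component, Finset.mem_filter]
  constructor
  · rintro ⟨hW, hs⟩
    have hsτ := (sameComp_iff hσNC hσint hτ hV hB).1 hs
    exact ⟨sameComp_mem hB hsτ, hsτ⟩
  · rintro ⟨hW, hs⟩
    exact ⟨Finset.mem_biUnion.2 ⟨V, hV, hW⟩,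
      (sameComp_iff hσNC hσint hτ hV hB).2 hs⟩

lemma components_eq {N : ℕ} (hσNC : IsNC σ) (hσint : IsIntervalPart σ)
    (hτ : ∀ V ∈ σ, IsNC (τ V) ∧ (∀ B ∈ τ V, B ⊆ V) ∧ (τ V).biUnion id = V)
    (χ : Finset ℕ → Fin N) :
    components (σ.biUnion τ) χ = σ.biUnion (fun V => components (τ V) χ) := by
  unfold components
  rw [Finset.biUnion_image]
  exact Finset.biUnion_congr rfl fun V hV =>
    Finset.image_congr fun B hB => component_eq hσNC hσint hτ hV hB χ

lemma mem_own_component {N : ℕ} {ρ : Blocks} {χ : Finset ℕ → Fin N}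
    {B : Finset ℕ} (hB : B ∈ ρ) : B ∈ component ρ χ B :=
  Finset.mem_filter.2 ⟨hB, Relation.ReflTransGen.refl⟩

lemma components_disj {N : ℕ} (hσNC : IsNC σ)
    (hτ : ∀ V ∈ σ, IsNC (τ V) ∧ (∀ B ∈ τ V, B ⊆ V) ∧ (τ V).biUnion id = V)
    (χ : Finset ℕ → Fin N) {V V' : Finset ℕ} (hV : V ∈ σ) (hV' : V' ∈ σ)
    (hne : V ≠ V') :
    Disjoint (components (τ V) χ) (components (τ V') χ) := by
  rw [Finset.disjoint_left]
  intro C hC hC'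
  obtain ⟨B, hB, rfl⟩ := Finset.mem_image.1 hC
  obtain ⟨B', hB', hEq⟩ := Finset.mem_image.1 hC'
  have h1 : B ∈ component (τ V) χ B := mem_own_component hB
  rw [← hEq] at h1
  have h2 : B ∈ τ V' := (Finset.filter_subset _ _) h1
  exact hne (block_unique hσNC hτ hV hV' hB h2)

lemma wc_iff {N : ℕ} (hσNC : IsNC σ) (hσint : IsIntervalPart σ)
    (hτ : ∀ V ∈ σ, IsNC (τ V) ∧ (∀ B ∈ τ V, B ⊆ V) ∧ (τ V).biUnion id = V)
    (T : Set (List (Fin N))) (χ : Finset ℕ → Fin N) :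
    WeaklyCompatible T (σ.biUnion τ) χ ↔ ∀ V ∈ σ, WeaklyCompatible T (τ V) χ := by
  constructor
  · intro h V hV B hB L hL
    exact h B (Finset.mem_biUnion.2 ⟨V, hV, hB⟩) L
      ((chain_iff hσNC hσint hτ hV hB L).2 hL)
  · intro h B hB L hL
    obtain ⟨V, hV, hBτ⟩ := Finset.mem_biUnion.1 hB
    exact h V hV B hBτ L ((chain_iff hσNC hσint hτ hV hBτ L).1 hL)

/-! ### The summand of the fixed-point identity -/

open Classical in
noncomputable def Gfun {N : ℕ} (T : Set (List (Fin N))) (a : Blocks → ℝ)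
    (ρ : Blocks) (χ : Finset ℕ → Fin N) : ℝ :=
  if WeaklyCompatible T ρ χ then ∏ C ∈ components ρ χ, a C else 0

lemma Gfun_congr {N : ℕ} (T : Set (List (Fin N))) (a : Blocks → ℝ) (ρ : Blocks)
    {χ χ' : Finset ℕ → Fin N} (h : ∀ B ∈ ρ, χ B = χ' B) :
    Gfun T a ρ χ = Gfun T a ρ χ' := by
  unfold Gfun
  rw [components_congr h]
  exact if_congr (wc_congr h) rfl rfl

lemma Gfun_factor {N : ℕ} (hσNC : IsNC σ) (hσint : IsIntervalPart σ)
    (hτ : ∀ V ∈ σ, IsNC (τ V) ∧ (∀ B ∈ τ V, B ⊆ V) ∧ (τ V).biUnion id = V)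
    (T : Set (List (Fin N))) (a : Blocks → ℝ) (χ : Finset ℕ → Fin N) :
    Gfun T a (σ.biUnion τ) χ = ∏ V ∈ σ, Gfun T a (τ V) χ := by
  unfold Gfun
  by_cases hwc : WeaklyCompatible T (σ.biUnion τ) χ
  · have hall := (wc_iff hσNC hσint hτ T χ).1 hwc
    rw [if_pos hwc, components_eq hσNC hσint hτ χ,
      Finset.prod_biUnion (fun V hV V' hV' hne =>
        components_disj hσNC hτ χ hV hV' hne)]
    exact Finset.prod_congr rfl fun V hV => (if_pos (hall V hV)).symm
  · rw [if_neg hwc]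
    have : ¬ ∀ V ∈ σ, WeaklyCompatible T (τ V) χ :=
      fun h => hwc ((wc_iff hσNC hσint hτ T χ).2 h)
    push_neg at this
    obtain ⟨V, hV, hVbad⟩ := this
    exact (Finset.prod_eq_zero (f := fun V =>
      if WeaklyCompatible T (τ V) χ then ∏ C ∈ components (τ V) χ, a C else 0)
      hV (if_neg hVbad)).symm

lemma cumulantRHS_eq {N : ℕ} [NeZero N] (n : ℕ) (T : Set (List (Fin N)))
    (a : Blocks → ℝ) (ρ : Blocks) :
    cumulantRHS n T a ρ =
      (∑ χ : ({V : Finset ℕ // V ∈ ρ} → Fin N),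
        Gfun T a ρ (extendColor ρ χ)) / (n : ℝ) ^ ρ.card := rfl

/-! ### The coloring equivalence -/

open Classical in
noncomputable def glueColor {N : ℕ} (σ : Blocks) (τ : Finset ℕ → Blocks)
    (p : ∀ V : {V // V ∈ σ}, {B // B ∈ τ V.1} → Fin N)
    (B : {B // B ∈ σ.biUnion τ}) : Fin N :=
  p ⟨(Finset.mem_biUnion.1 B.2).choose, (Finset.mem_biUnion.1 B.2).choose_spec.1⟩
    ⟨B.1, (Finset.mem_biUnion.1 B.2).choose_spec.2⟩

lemma glueColor_eq {N : ℕ} {σ : Blocks} {τ : Finset ℕ → Blocks}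
    (huniq : ∀ V V' B : Finset ℕ, V ∈ σ → V' ∈ σ → B ∈ τ V → B ∈ τ V' → V = V')
    (p : ∀ V : {V // V ∈ σ}, {B // B ∈ τ V.1} → Fin N)
    (B : {B // B ∈ σ.biUnion τ}) (V : Finset ℕ) (hV : V ∈ σ) (hB : B.1 ∈ τ V) :
    glueColor σ τ p B = p ⟨V, hV⟩ ⟨B.1, hB⟩ := by
  unfold glueColor
  have hc : (Finset.mem_biUnion.1 B.2).choose = V :=
    huniq _ _ _ (Finset.mem_biUnion.1 B.2).choose_spec.1 hV
      (Finset.mem_biUnion.1 B.2).choose_spec.2 hB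
  subst hc
  rfl

open Classical in
noncomputable def colorEquiv {N : ℕ} (σ : Blocks) (τ : Finset ℕ → Blocks)
    (huniq : ∀ V V' B : Finset ℕ, V ∈ σ → V' ∈ σ → B ∈ τ V → B ∈ τ V' → V = V') :
    ({B // B ∈ σ.biUnion τ} → Fin N) ≃
      (∀ V : {V // V ∈ σ}, {B // B ∈ τ V.1} → Fin N) where
  toFun χ V b := χ ⟨b.1, Finset.mem_biUnion.2 ⟨V.1, V.2, b.2⟩⟩
  invFun p := glueColor σ τ p
  left_inv χ := rfl
  right_inv p := by
    funext V b
    exact glueColor_eq huniq p ⟨b.1, Finset.mem_biUnion.2 ⟨V.1, V.2, b.2⟩⟩ V.1 V.2 b.2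


lemma extend_restrict {N : ℕ} [NeZero N] {σ : Blocks} {τ : Finset ℕ → Blocks}
    {V : Finset ℕ} (hV : V ∈ σ) (χ : {B // B ∈ σ.biUnion τ} → Fin N) :
    ∀ B ∈ τ V, extendColor (σ.biUnion τ) χ B =
      extendColor (τ V) (fun b => χ ⟨b.1, Finset.mem_biUnion.2 ⟨V, hV, b.2⟩⟩) B := by
  intro B hB
  unfold extendColor
  rw [dif_pos (Finset.mem_biUnion.2 ⟨V, hV, hB⟩), dif_pos hB]

end Aux

/-- Multiplicativity of the cumulant coefficients under concatenation: if `π` is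
obtained by partitioning each consecutive interval block `V` of an interval
partition `σ` by a non-crossing partition `τ V`, then
`α_{T,π} = Π_{V ∈ σ} α_{T, τ V}`. -/
theorem stmt14 {N : ℕ} [NeZero N] (n : ℕ) (hn2 : 2 ≤ n)
    (T : Set (List (Fin N))) (hT : IsRootedSubtree T)
    (hn : {j : Fin N | [j] ∈ T}.ncard = n)
    (σ : Blocks) (hσNC : IsNC σ) (hσint : IsIntervalPart σ)
    (τ : Finset ℕ → Blocks)
    (hτ : ∀ V ∈ σ, IsNC (τ V) ∧ (∀ B ∈ τ V, B ⊆ V) ∧ (τ V).biUnion id = V)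
    (a : Blocks → ℝ) (ha : SatisfiesFP n T a) :
    a (σ.biUnion τ) = ∏ V ∈ σ, a (τ V) := by
  have huniq : ∀ V V' B : Finset ℕ, V ∈ σ → V' ∈ σ → B ∈ τ V → B ∈ τ V' → V = V' :=
    fun V V' B hV hV' hB hB' => block_unique hσNC hτ hV hV' hB hB'
  rw [ha.2 _ (pi_NC hσNC hσint hτ), cumulantRHS_eq,
    Finset.prod_congr rfl (fun V hV => (ha.2 _ (hτ V hV).1).trans (cumulantRHS_eq n T a (τ V))),
    Finset.prod_div_distrib, Finset.prod_pow_eq_pow_sum,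
    ← Finset.card_biUnion (fun V hV V' hV' hne => Finset.disjoint_left.2
        fun B hB hB' => hne (huniq V V' B hV hV' hB hB'))]
  congr 1
  have step1 : ∀ χ : ({B // B ∈ σ.biUnion τ} → Fin N),
      Gfun T a (σ.biUnion τ) (extendColor (σ.biUnion τ) χ) =
        ∏ V : {V // V ∈ σ}, Gfun T a (τ V.1)
          (extendColor (τ V.1) (colorEquiv σ τ huniq χ V)) := by
    intro χ
    rw [Gfun_factor hσNC hσint hτ T a,
      ← Finset.prod_coe_sort σ (fun W => Gfun T a (τ W) (extendColor (σ.biUnion τ) χ))]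
    exact Finset.prod_congr rfl fun V _ => Gfun_congr T a (τ V.1) (extend_restrict V.2 χ)
  calc (∑ χ : ({B // B ∈ σ.biUnion τ} → Fin N),
          Gfun T a (σ.biUnion τ) (extendColor (σ.biUnion τ) χ))
      = ∑ χ : ({B // B ∈ σ.biUnion τ} → Fin N), ∏ V : {V // V ∈ σ},
          Gfun T a (τ V.1) (extendColor (τ V.1) (colorEquiv σ τ huniq χ V)) :=
        Finset.sum_congr rfl fun χ _ => step1 χ
    _ = ∑ p : (∀ V : {V // V ∈ σ}, {B // B ∈ τ V.1} → Fin N),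
          ∏ V : {V // V ∈ σ}, Gfun T a (τ V.1) (extendColor (τ V.1) (p V)) :=
        Fintype.sum_equiv (colorEquiv σ τ huniq) _ _ (fun χ => rfl)
    _ = ∏ V : {V // V ∈ σ}, ∑ q : ({B // B ∈ τ V.1} → Fin N),
          Gfun T a (τ V.1) (extendColor (τ V.1) q) := by
        have h := Finset.prod_univ_sum
          (fun V : {V // V ∈ σ} => (Finset.univ : Finset ({B // B ∈ τ V.1} → Fin N)))
          (fun V q => Gfun T a (τ V.1) (extendColor (τ V.1) q))
        rw [Fintype.piFinset_univ] at h
        exact h.symm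
    _ = ∏ V ∈ σ, ∑ q : ({B // B ∈ τ V} → Fin N), Gfun T a (τ V) (extendColor (τ V) q) :=
        Finset.prod_coe_sort σ (fun W =>
          ∑ q : ({B // B ∈ τ W} → Fin N), Gfun T a (τ W) (extendColor (τ W) q))
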